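/- (δISS one-step contraction of the GGNN layer) Consider x_i⁺ = tanh(q̂_i ∘ (A x_i) + q̃_i ∘ (B u_i) + b) for i = 1, 2, where q̂_i = σ(Â x_i + B̂ u_i + b̂), q̃_i = σ(Ã x_i + B̃ u_i + b̃), σ is the logistic function applied entrywise, and ‖x_i‖_∞ ≤ 1, ‖u_i‖_∞ ≤ 1. Then ‖x₁⁺ - x₂⁺‖_∞ ≤ 𝒜_δ ‖x₁ - x₂‖_∞ + ℬ_δ ‖u₁ - u₂‖_∞, where 𝒜_δ = ‖A‖_∞ + (1/4)‖Â‖_∞‖A‖_∞ + (1/4)‖Ã‖_∞‖B‖_∞ and ℬ_δ = ‖B‖_∞ + (1/4)‖B̂‖_∞‖A‖_∞ + (1/4)‖B̃‖_∞‖B‖_∞. -/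

import Mathlib

attribute [local instance] Matrix.linftyOpNormedAddCommGroup

noncomputable def logistic (x : ℝ) : ℝ := 1 / (1 + Real.exp (-x))

lemma one_add_exp_pos (x : ℝ) : 0 < 1 + Real.exp (-x) := by positivity

lemma logistic_hasDerivAt (x : ℝ) :
    HasDerivAt logistic (Real.exp (-x) / (1 + Real.exp (-x))^2) x := by
  have h : HasDerivAt (fun x : ℝ => 1 + Real.exp (-x)) (-Real.exp (-x)) x := by
    simpa using (((Real.hasDerivAt_exp (-x)).comp x (hasDerivAt_neg x)).const_add 1)
  have h2 := h.inv (ne_of_gt (one_add_exp_pos x))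
  have : HasDerivAt (fun y : ℝ => (1 + Real.exp (-y))⁻¹)
      (Real.exp (-x) / (1 + Real.exp (-x))^2) x := by
    exact (by simpa [neg_div, neg_neg] using h2 : HasDerivAt (fun x : ℝ => 1 + Real.exp (-x))⁻¹ (Real.exp (-x) / (1 + Real.exp (-x))^2) x)
  exact this.congr_of_eventuallyEq (by
    filter_upwards with y
    simp [logistic, one_div])

lemma logistic_deriv_bound (x : ℝ) : Real.exp (-x) / (1 + Real.exp (-x))^2 ≤ 1/4 := by
  rw [div_le_iff₀ (by positivity)]
  nlinarith [sq_nonneg (1 - Real.exp (-x)), Real.exp_pos (-x)]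

lemma logistic_lipschitz (a c : ℝ) : |logistic a - logistic c| ≤ (1/4) * |a - c| := by
  have h := lipschitzWith_of_nnnorm_deriv_le (C := (1/4 : NNReal))
    (fun x => (logistic_hasDerivAt x).differentiableAt)
    (fun x => by
      rw [(logistic_hasDerivAt x).deriv]
      rw [← NNReal.coe_le_coe]
      simp only [coe_nnnorm, Real.norm_eq_abs]
      rw [abs_of_nonneg (by positivity)]
      calc Real.exp (-x) / (1 + Real.exp (-x))^2 ≤ 1/4 := logistic_deriv_bound x
        _ = ((1/4 : NNReal) : ℝ) := by norm_num)
  have := h.dist_le_mul a c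
  rw [Real.dist_eq, Real.dist_eq] at this
  calc |logistic a - logistic c| ≤ ((1/4 : NNReal) : ℝ) * |a - c| := this
    _ = (1/4) * |a - c| := by norm_num

lemma logistic_abs_le_one (x : ℝ) : |logistic x| ≤ 1 := by
  have h1 : 0 < logistic x := by unfold logistic; positivity
  have h2 : logistic x < 1 := by
    rw [logistic, div_lt_one (one_add_exp_pos x)]
    linarith [Real.exp_pos (-x)]
  rw [abs_of_pos h1]; linarith

lemma tanh_hasDerivAt (x : ℝ) : HasDerivAt Real.tanh (1 / Real.cosh x ^ 2) x := by
  have h := (Real.hasDerivAt_sinh x).div (Real.hasDerivAt_cosh x)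
    (ne_of_gt (Real.cosh_pos x))
  have heq : (Real.cosh x * Real.cosh x - Real.sinh x * Real.sinh x) / Real.cosh x ^ 2
      = 1 / Real.cosh x ^ 2 := by
    rw [show Real.cosh x * Real.cosh x - Real.sinh x * Real.sinh x = 1 by
      nlinarith [Real.cosh_sq x]]
  have : HasDerivAt (fun y => Real.sinh y / Real.cosh y) (1 / Real.cosh x ^ 2) x := heq ▸ h
  exact this.congr_of_eventuallyEq (by filter_upwards with y using (Real.tanh_eq_sinh_div_cosh y))

lemma tanh_lipschitz (a c : ℝ) : |Real.tanh a - Real.tanh c| ≤ |a - c| := by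
  have h := lipschitzWith_of_nnnorm_deriv_le (C := 1)
    (fun x => (tanh_hasDerivAt x).differentiableAt)
    (fun x => by
      rw [(tanh_hasDerivAt x).deriv]
      rw [← NNReal.coe_le_coe]
      have h1 : (1:ℝ) ≤ Real.cosh x ^ 2 := by nlinarith [Real.one_le_cosh x]
      simp only [coe_nnnorm, Real.norm_eq_abs, NNReal.coe_one]
      rw [abs_of_nonneg (by positivity), div_le_one (by positivity)]
      exact h1)
  have := h.dist_le_mul a c
  simpa [Real.dist_eq] using this

lemma key_term_bound {q₁ q₂ v₁ v₂ Dv Dq M : ℝ} (hq1 : |q₁| ≤ 1)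
    (hv : |v₁ - v₂| ≤ Dv) (hq : |q₁ - q₂| ≤ Dq) (hv2 : |v₂| ≤ M) :
    |q₁ * v₁ - q₂ * v₂| ≤ Dv + Dq * M := by
  have h : q₁ * v₁ - q₂ * v₂ = q₁ * (v₁ - v₂) + (q₁ - q₂) * v₂ := by ring
  rw [h]
  calc |q₁ * (v₁ - v₂) + (q₁ - q₂) * v₂|
      ≤ |q₁ * (v₁ - v₂)| + |(q₁ - q₂) * v₂| := abs_add_le _ _
    _ = |q₁| * |v₁ - v₂| + |q₁ - q₂| * |v₂| := by rw [abs_mul, abs_mul]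
    _ ≤ Dv + Dq * M := by
        nlinarith [abs_nonneg q₁, abs_nonneg (v₁ - v₂), abs_nonneg (q₁ - q₂), abs_nonneg v₂]

theorem ggnn_deltaISS_one_step {n m : ℕ}
    (A Ahat Atil : Matrix (Fin n) (Fin n) ℝ)
    (B Bhat Btil : Matrix (Fin n) (Fin m) ℝ)
    (b bhat btil : Fin n → ℝ)
    (x₁ x₂ : Fin n → ℝ) (u₁ u₂ : Fin m → ℝ)
    (hx₁ : ‖x₁‖ ≤ 1) (hx₂ : ‖x₂‖ ≤ 1) (hu₁ : ‖u₁‖ ≤ 1) (hu₂ : ‖u₂‖ ≤ 1)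
    (qhat₁ qhat₂ qtil₁ qtil₂ xp₁ xp₂ : Fin n → ℝ)
    (hqhat₁ : qhat₁ = fun i => logistic (Ahat.mulVec x₁ i + Bhat.mulVec u₁ i + bhat i))
    (hqhat₂ : qhat₂ = fun i => logistic (Ahat.mulVec x₂ i + Bhat.mulVec u₂ i + bhat i))
    (hqtil₁ : qtil₁ = fun i => logistic (Atil.mulVec x₁ i + Btil.mulVec u₁ i + btil i))
    (hqtil₂ : qtil₂ = fun i => logistic (Atil.mulVec x₂ i + Btil.mulVec u₂ i + btil i))
    (hxp₁ : xp₁ = fun i => Real.tanh (qhat₁ i * A.mulVec x₁ i + qtil₁ i * B.mulVec u₁ i + b i))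
    (hxp₂ : xp₂ = fun i => Real.tanh (qhat₂ i * A.mulVec x₂ i + qtil₂ i * B.mulVec u₂ i + b i)) :
    ‖xp₁ - xp₂‖ ≤
      (‖A‖ + (1/4) * ‖Ahat‖ * ‖A‖ + (1/4) * ‖Atil‖ * ‖B‖) * ‖x₁ - x₂‖ +
      (‖B‖ + (1/4) * ‖Bhat‖ * ‖A‖ + (1/4) * ‖Btil‖ * ‖B‖) * ‖u₁ - u₂‖ := by
  set dx := ‖x₁ - x₂‖ with hdx
  set du := ‖u₁ - u₂‖ with hdu
  have hdx0 : 0 ≤ dx := norm_nonneg _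
  have hdu0 : 0 ≤ du := norm_nonneg _
  -- generic bound on componentwise difference of mulVecs
  have mv_bound : ∀ {k : ℕ} (M : Matrix (Fin n) (Fin k) ℝ) (v w : Fin k → ℝ) (i : Fin n),
      |M.mulVec v i - M.mulVec w i| ≤ ‖M‖ * ‖v - w‖ := by
    intro k M v w i
    have h1 : M.mulVec v i - M.mulVec w i = M.mulVec (v - w) i := by
      rw [Matrix.mulVec_sub]; rfl
    rw [h1]
    calc |M.mulVec (v - w) i| ≤ ‖M.mulVec (v - w)‖ := by
          simpa using norm_le_pi_norm (M.mulVec (v - w)) i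
      _ ≤ ‖M‖ * ‖v - w‖ := Matrix.linfty_opNorm_mulVec M (v - w)
  have mv_bound1 : ∀ {k : ℕ} (M : Matrix (Fin n) (Fin k) ℝ) (v : Fin k → ℝ), ‖v‖ ≤ 1 →
      ∀ i : Fin n, |M.mulVec v i| ≤ ‖M‖ := by
    intro k M v hv i
    calc |M.mulVec v i| ≤ ‖M.mulVec v‖ := by simpa using norm_le_pi_norm (M.mulVec v) i
      _ ≤ ‖M‖ * ‖v‖ := Matrix.linfty_opNorm_mulVec M v
      _ ≤ ‖M‖ * 1 := by
          exact mul_le_mul_of_nonneg_left hv (norm_nonneg M)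
      _ = ‖M‖ := mul_one _
  rw [pi_norm_le_iff_of_nonneg (by positivity)]
  intro i
  rw [Pi.sub_apply, hxp₁, hxp₂]
  simp only [Real.norm_eq_abs]
  -- Lipschitz of tanh
  refine le_trans (tanh_lipschitz _ _) ?_
  have harg : qhat₁ i * A.mulVec x₁ i + qtil₁ i * B.mulVec u₁ i + b i -
      (qhat₂ i * A.mulVec x₂ i + qtil₂ i * B.mulVec u₂ i + b i)
      = (qhat₁ i * A.mulVec x₁ i - qhat₂ i * A.mulVec x₂ i) +
        (qtil₁ i * B.mulVec u₁ i - qtil₂ i * B.mulVec u₂ i) := by ring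
  rw [harg]
  -- bound on qhat difference
  have hqhd : |qhat₁ i - qhat₂ i| ≤ (1/4) * (‖Ahat‖ * dx + ‖Bhat‖ * du) := by
    rw [hqhat₁, hqhat₂]
    refine le_trans (logistic_lipschitz _ _) ?_
    have h1 : Ahat.mulVec x₁ i + Bhat.mulVec u₁ i + bhat i -
        (Ahat.mulVec x₂ i + Bhat.mulVec u₂ i + bhat i)
        = (Ahat.mulVec x₁ i - Ahat.mulVec x₂ i) + (Bhat.mulVec u₁ i - Bhat.mulVec u₂ i) := by
      ring
    rw [h1]
    have := abs_add_le (Ahat.mulVec x₁ i - Ahat.mulVec x₂ i) (Bhat.mulVec u₁ i - Bhat.mulVec u₂ i)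
    nlinarith [mv_bound Ahat x₁ x₂ i, mv_bound Bhat u₁ u₂ i]
  have hqtd : |qtil₁ i - qtil₂ i| ≤ (1/4) * (‖Atil‖ * dx + ‖Btil‖ * du) := by
    rw [hqtil₁, hqtil₂]
    refine le_trans (logistic_lipschitz _ _) ?_
    have h1 : Atil.mulVec x₁ i + Btil.mulVec u₁ i + btil i -
        (Atil.mulVec x₂ i + Btil.mulVec u₂ i + btil i)
        = (Atil.mulVec x₁ i - Atil.mulVec x₂ i) + (Btil.mulVec u₁ i - Btil.mulVec u₂ i) := by
      ring
    rw [h1]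
    have := abs_add_le (Atil.mulVec x₁ i - Atil.mulVec x₂ i) (Btil.mulVec u₁ i - Btil.mulVec u₂ i)
    nlinarith [mv_bound Atil x₁ x₂ i, mv_bound Btil u₁ u₂ i]
  have hq1 : |qhat₁ i| ≤ 1 := by rw [hqhat₁]; exact logistic_abs_le_one _
  have ht1 : |qtil₁ i| ≤ 1 := by rw [hqtil₁]; exact logistic_abs_le_one _
  have term1 : |qhat₁ i * A.mulVec x₁ i - qhat₂ i * A.mulVec x₂ i|
      ≤ ‖A‖ * dx + ((1/4) * (‖Ahat‖ * dx + ‖Bhat‖ * du)) * ‖A‖ :=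
    key_term_bound hq1 (mv_bound A x₁ x₂ i) hqhd (mv_bound1 A x₂ hx₂ i)
  have term2 : |qtil₁ i * B.mulVec u₁ i - qtil₂ i * B.mulVec u₂ i|
      ≤ ‖B‖ * du + ((1/4) * (‖Atil‖ * dx + ‖Btil‖ * du)) * ‖B‖ :=
    key_term_bound ht1 (mv_bound B u₁ u₂ i) hqtd (mv_bound1 B u₂ hu₂ i)
  have habs := abs_add_le (qhat₁ i * A.mulVec x₁ i - qhat₂ i * A.mulVec x₂ i)
    (qtil₁ i * B.mulVec u₁ i - qtil₂ i * B.mulVec u₂ i)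
  nlinarith [term1, term2, habs]
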